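/- Every element of the group P₃ generated by diag(i,1), diag(j,1), (1/√2)·[[1,1],[1,−1]] maps each of the ten MUB lines (spanned by (1,0),(0,1),(1,±1),(1,±i),(1,±j),(1,±k)) to one of the ten MUB lines; i.e., P₃ is a group of symmetries of the ten MUB lines. -/

import Mathlib

noncomputable section
open Quaternion Matrix

abbrev HQ := ℍ[ℝ]
def qi : HQ := ⟨0,1,0,0⟩
def qj : HQ := ⟨0,0,1,0⟩
def qk : HQ := ⟨0,0,0,1⟩

/-- Inner product on the right ℍ-module ℍ^d. -/
def inprod {d : ℕ} (v w : Fin d → HQ) : HQ := ∑ m, star (v m) * w m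


/-- The ten MUB vectors (1,0), (0,1), (1,q) for q ∈ {±1,±i,±j,±k}. -/
def mubVec : Fin 10 → (Fin 2 → HQ) :=
  ![![1, 0], ![0, 1], ![1, 1], ![1, -1], ![1, qi], ![1, -qi],
    ![1, qj], ![1, -qj], ![1, qk], ![1, -qk]]

@[simp] private lemma qi_re : qi.re = 0 := rfl
@[simp] private lemma qi_imI : qi.imI = 1 := rfl
@[simp] private lemma qi_imJ : qi.imJ = 0 := rfl
@[simp] private lemma qi_imK : qi.imK = 0 := rfl
@[simp] private lemma qj_re : qj.re = 0 := rfl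
@[simp] private lemma qj_imI : qj.imI = 0 := rfl
@[simp] private lemma qj_imJ : qj.imJ = 1 := rfl
@[simp] private lemma qj_imK : qj.imK = 0 := rfl
@[simp] private lemma qk_re : qk.re = 0 := rfl
@[simp] private lemma qk_imI : qk.imI = 0 := rfl
@[simp] private lemma qk_imJ : qk.imJ = 0 := rfl
@[simp] private lemma qk_imK : qk.imK = 1 := rfl

private lemma hc : ((((Real.sqrt 2)⁻¹ : ℝ)) : HQ) ≠ 0 := by
  simp [Quaternion.coe_injective.eq_iff' Quaternion.coe_zero, Real.sqrt_ne_zero']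

private lemma re_ne_zero (x : HQ) (h : x.re = 1) : x ≠ 0 := fun h0 => by
  rw [h0] at h; simp at h

private lemma hqi : qi ≠ 0 := by simp [Quaternion.ext_iff]
private lemma hqj : qj ≠ 0 := by simp [Quaternion.ext_iff]

private lemma mulVec_scalar (A : Matrix (Fin 2) (Fin 2) HQ) (v : Fin 2 → HQ) (lam : HQ) :
    A.mulVec (fun m => v m * lam) = fun m => A.mulVec v m * lam := by
  funext i
  simp [Matrix.mulVec, dotProduct, Finset.sum_mul, add_mul, mul_assoc]

private lemma cA0 : Matrix.mulVec (!![qi, 0; 0, 1] : Matrix (Fin 2) (Fin 2) HQ) ![1, 0] = fun m => (![1, 0] : Fin 2 → HQ) m * (qi) := by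
  funext m; fin_cases m <;> ext <;>
    simp [Matrix.mulVec, dotProduct, Fin.sum_univ_two,
      Matrix.smul_apply, smul_eq_mul] <;> ring
private lemma cA1 : Matrix.mulVec (!![qi, 0; 0, 1] : Matrix (Fin 2) (Fin 2) HQ) ![0, 1] = fun m => (![0, 1] : Fin 2 → HQ) m * (1) := by
  funext m; fin_cases m <;> ext <;>
    simp [Matrix.mulVec, dotProduct, Fin.sum_univ_two,
      Matrix.smul_apply, smul_eq_mul] <;> ring
private lemma cA2 : Matrix.mulVec (!![qi, 0; 0, 1] : Matrix (Fin 2) (Fin 2) HQ) ![1, 1] = fun m => (![1, -qi] : Fin 2 → HQ) m * (qi) := by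
  funext m; fin_cases m <;> ext <;>
    simp [Matrix.mulVec, dotProduct, Fin.sum_univ_two,
      Matrix.smul_apply, smul_eq_mul] <;> ring
private lemma cA3 : Matrix.mulVec (!![qi, 0; 0, 1] : Matrix (Fin 2) (Fin 2) HQ) ![1, -1] = fun m => (![1, qi] : Fin 2 → HQ) m * (qi) := by
  funext m; fin_cases m <;> ext <;>
    simp [Matrix.mulVec, dotProduct, Fin.sum_univ_two,
      Matrix.smul_apply, smul_eq_mul] <;> ring
private lemma cA4 : Matrix.mulVec (!![qi, 0; 0, 1] : Matrix (Fin 2) (Fin 2) HQ) ![1, qi] = fun m => (![1, 1] : Fin 2 → HQ) m * (qi) := by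
  funext m; fin_cases m <;> ext <;>
    simp [Matrix.mulVec, dotProduct, Fin.sum_univ_two,
      Matrix.smul_apply, smul_eq_mul] <;> ring
private lemma cA5 : Matrix.mulVec (!![qi, 0; 0, 1] : Matrix (Fin 2) (Fin 2) HQ) ![1, -qi] = fun m => (![1, -1] : Fin 2 → HQ) m * (qi) := by
  funext m; fin_cases m <;> ext <;>
    simp [Matrix.mulVec, dotProduct, Fin.sum_univ_two,
      Matrix.smul_apply, smul_eq_mul] <;> ring
private lemma cA6 : Matrix.mulVec (!![qi, 0; 0, 1] : Matrix (Fin 2) (Fin 2) HQ) ![1, qj] = fun m => (![1, qk] : Fin 2 → HQ) m * (qi) := by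
  funext m; fin_cases m <;> ext <;>
    simp [Matrix.mulVec, dotProduct, Fin.sum_univ_two,
      Matrix.smul_apply, smul_eq_mul] <;> ring
private lemma cA7 : Matrix.mulVec (!![qi, 0; 0, 1] : Matrix (Fin 2) (Fin 2) HQ) ![1, -qj] = fun m => (![1, -qk] : Fin 2 → HQ) m * (qi) := by
  funext m; fin_cases m <;> ext <;>
    simp [Matrix.mulVec, dotProduct, Fin.sum_univ_two,
      Matrix.smul_apply, smul_eq_mul] <;> ring
private lemma cA8 : Matrix.mulVec (!![qi, 0; 0, 1] : Matrix (Fin 2) (Fin 2) HQ) ![1, qk] = fun m => (![1, -qj] : Fin 2 → HQ) m * (qi) := by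
  funext m; fin_cases m <;> ext <;>
    simp [Matrix.mulVec, dotProduct, Fin.sum_univ_two,
      Matrix.smul_apply, smul_eq_mul] <;> ring
private lemma cA9 : Matrix.mulVec (!![qi, 0; 0, 1] : Matrix (Fin 2) (Fin 2) HQ) ![1, -qk] = fun m => (![1, qj] : Fin 2 → HQ) m * (qi) := by
  funext m; fin_cases m <;> ext <;>
    simp [Matrix.mulVec, dotProduct, Fin.sum_univ_two,
      Matrix.smul_apply, smul_eq_mul] <;> ring
private lemma cB0 : Matrix.mulVec (!![qj, 0; 0, 1] : Matrix (Fin 2) (Fin 2) HQ) ![1, 0] = fun m => (![1, 0] : Fin 2 → HQ) m * (qj) := by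
  funext m; fin_cases m <;> ext <;>
    simp [Matrix.mulVec, dotProduct, Fin.sum_univ_two,
      Matrix.smul_apply, smul_eq_mul] <;> ring
private lemma cB1 : Matrix.mulVec (!![qj, 0; 0, 1] : Matrix (Fin 2) (Fin 2) HQ) ![0, 1] = fun m => (![0, 1] : Fin 2 → HQ) m * (1) := by
  funext m; fin_cases m <;> ext <;>
    simp [Matrix.mulVec, dotProduct, Fin.sum_univ_two,
      Matrix.smul_apply, smul_eq_mul] <;> ring
private lemma cB2 : Matrix.mulVec (!![qj, 0; 0, 1] : Matrix (Fin 2) (Fin 2) HQ) ![1, 1] = fun m => (![1, -qj] : Fin 2 → HQ) m * (qj) := by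
  funext m; fin_cases m <;> ext <;>
    simp [Matrix.mulVec, dotProduct, Fin.sum_univ_two,
      Matrix.smul_apply, smul_eq_mul] <;> ring
private lemma cB3 : Matrix.mulVec (!![qj, 0; 0, 1] : Matrix (Fin 2) (Fin 2) HQ) ![1, -1] = fun m => (![1, qj] : Fin 2 → HQ) m * (qj) := by
  funext m; fin_cases m <;> ext <;>
    simp [Matrix.mulVec, dotProduct, Fin.sum_univ_two,
      Matrix.smul_apply, smul_eq_mul] <;> ring
private lemma cB4 : Matrix.mulVec (!![qj, 0; 0, 1] : Matrix (Fin 2) (Fin 2) HQ) ![1, qi] = fun m => (![1, -qk] : Fin 2 → HQ) m * (qj) := by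
  funext m; fin_cases m <;> ext <;>
    simp [Matrix.mulVec, dotProduct, Fin.sum_univ_two,
      Matrix.smul_apply, smul_eq_mul] <;> ring
private lemma cB5 : Matrix.mulVec (!![qj, 0; 0, 1] : Matrix (Fin 2) (Fin 2) HQ) ![1, -qi] = fun m => (![1, qk] : Fin 2 → HQ) m * (qj) := by
  funext m; fin_cases m <;> ext <;>
    simp [Matrix.mulVec, dotProduct, Fin.sum_univ_two,
      Matrix.smul_apply, smul_eq_mul] <;> ring
private lemma cB6 : Matrix.mulVec (!![qj, 0; 0, 1] : Matrix (Fin 2) (Fin 2) HQ) ![1, qj] = fun m => (![1, 1] : Fin 2 → HQ) m * (qj) := by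
  funext m; fin_cases m <;> ext <;>
    simp [Matrix.mulVec, dotProduct, Fin.sum_univ_two,
      Matrix.smul_apply, smul_eq_mul] <;> ring
private lemma cB7 : Matrix.mulVec (!![qj, 0; 0, 1] : Matrix (Fin 2) (Fin 2) HQ) ![1, -qj] = fun m => (![1, -1] : Fin 2 → HQ) m * (qj) := by
  funext m; fin_cases m <;> ext <;>
    simp [Matrix.mulVec, dotProduct, Fin.sum_univ_two,
      Matrix.smul_apply, smul_eq_mul] <;> ring
private lemma cB8 : Matrix.mulVec (!![qj, 0; 0, 1] : Matrix (Fin 2) (Fin 2) HQ) ![1, qk] = fun m => (![1, qi] : Fin 2 → HQ) m * (qj) := by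
  funext m; fin_cases m <;> ext <;>
    simp [Matrix.mulVec, dotProduct, Fin.sum_univ_two,
      Matrix.smul_apply, smul_eq_mul] <;> ring
private lemma cB9 : Matrix.mulVec (!![qj, 0; 0, 1] : Matrix (Fin 2) (Fin 2) HQ) ![1, -qk] = fun m => (![1, -qi] : Fin 2 → HQ) m * (qj) := by
  funext m; fin_cases m <;> ext <;>
    simp [Matrix.mulVec, dotProduct, Fin.sum_univ_two,
      Matrix.smul_apply, smul_eq_mul] <;> ring
private lemma cH0 : Matrix.mulVec ((((Real.sqrt 2)⁻¹ : ℝ) : HQ) • !![1, 1; 1, -1] : Matrix (Fin 2) (Fin 2) HQ) ![1, 0] = fun m => (![1, 1] : Fin 2 → HQ) m * (((((Real.sqrt 2)⁻¹ : ℝ)) : HQ)) := by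
  generalize ((Real.sqrt 2)⁻¹ : ℝ) = r
  funext m; fin_cases m <;> ext <;>
    simp [Matrix.mulVec, dotProduct, Fin.sum_univ_two,
      Matrix.smul_apply, smul_eq_mul] <;> ring
private lemma cH1 : Matrix.mulVec ((((Real.sqrt 2)⁻¹ : ℝ) : HQ) • !![1, 1; 1, -1] : Matrix (Fin 2) (Fin 2) HQ) ![0, 1] = fun m => (![1, -1] : Fin 2 → HQ) m * (((((Real.sqrt 2)⁻¹ : ℝ)) : HQ)) := by
  generalize ((Real.sqrt 2)⁻¹ : ℝ) = r
  funext m; fin_cases m <;> ext <;>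
    simp [Matrix.mulVec, dotProduct, Fin.sum_univ_two,
      Matrix.smul_apply, smul_eq_mul] <;> ring
private lemma cH2 : Matrix.mulVec ((((Real.sqrt 2)⁻¹ : ℝ) : HQ) • !![1, 1; 1, -1] : Matrix (Fin 2) (Fin 2) HQ) ![1, 1] = fun m => (![1, 0] : Fin 2 → HQ) m * ((((2:ℝ)) : HQ) * ((((Real.sqrt 2)⁻¹ : ℝ)) : HQ)) := by
  generalize ((Real.sqrt 2)⁻¹ : ℝ) = r
  funext m; fin_cases m <;> ext <;>
    simp [Matrix.mulVec, dotProduct, Fin.sum_univ_two,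
      Matrix.smul_apply, smul_eq_mul] <;> ring
private lemma cH3 : Matrix.mulVec ((((Real.sqrt 2)⁻¹ : ℝ) : HQ) • !![1, 1; 1, -1] : Matrix (Fin 2) (Fin 2) HQ) ![1, -1] = fun m => (![0, 1] : Fin 2 → HQ) m * ((((2:ℝ)) : HQ) * ((((Real.sqrt 2)⁻¹ : ℝ)) : HQ)) := by
  generalize ((Real.sqrt 2)⁻¹ : ℝ) = r
  funext m; fin_cases m <;> ext <;>
    simp [Matrix.mulVec, dotProduct, Fin.sum_univ_two,
      Matrix.smul_apply, smul_eq_mul] <;> ring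
private lemma cH4 : Matrix.mulVec ((((Real.sqrt 2)⁻¹ : ℝ) : HQ) • !![1, 1; 1, -1] : Matrix (Fin 2) (Fin 2) HQ) ![1, qi] = fun m => (![1, -qi] : Fin 2 → HQ) m * (((((Real.sqrt 2)⁻¹ : ℝ)) : HQ) * (1 + qi)) := by
  generalize ((Real.sqrt 2)⁻¹ : ℝ) = r
  funext m; fin_cases m <;> ext <;>
    simp [Matrix.mulVec, dotProduct, Fin.sum_univ_two,
      Matrix.smul_apply, smul_eq_mul] <;> ring
private lemma cH5 : Matrix.mulVec ((((Real.sqrt 2)⁻¹ : ℝ) : HQ) • !![1, 1; 1, -1] : Matrix (Fin 2) (Fin 2) HQ) ![1, -qi] = fun m => (![1, qi] : Fin 2 → HQ) m * (((((Real.sqrt 2)⁻¹ : ℝ)) : HQ) * (1 - qi)) := by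
  generalize ((Real.sqrt 2)⁻¹ : ℝ) = r
  funext m; fin_cases m <;> ext <;>
    simp [Matrix.mulVec, dotProduct, Fin.sum_univ_two,
      Matrix.smul_apply, smul_eq_mul] <;> ring
private lemma cH6 : Matrix.mulVec ((((Real.sqrt 2)⁻¹ : ℝ) : HQ) • !![1, 1; 1, -1] : Matrix (Fin 2) (Fin 2) HQ) ![1, qj] = fun m => (![1, -qj] : Fin 2 → HQ) m * (((((Real.sqrt 2)⁻¹ : ℝ)) : HQ) * (1 + qj)) := by
  generalize ((Real.sqrt 2)⁻¹ : ℝ) = r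
  funext m; fin_cases m <;> ext <;>
    simp [Matrix.mulVec, dotProduct, Fin.sum_univ_two,
      Matrix.smul_apply, smul_eq_mul] <;> ring
private lemma cH7 : Matrix.mulVec ((((Real.sqrt 2)⁻¹ : ℝ) : HQ) • !![1, 1; 1, -1] : Matrix (Fin 2) (Fin 2) HQ) ![1, -qj] = fun m => (![1, qj] : Fin 2 → HQ) m * (((((Real.sqrt 2)⁻¹ : ℝ)) : HQ) * (1 - qj)) := by
  generalize ((Real.sqrt 2)⁻¹ : ℝ) = r
  funext m; fin_cases m <;> ext <;>
    simp [Matrix.mulVec, dotProduct, Fin.sum_univ_two,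
      Matrix.smul_apply, smul_eq_mul] <;> ring
private lemma cH8 : Matrix.mulVec ((((Real.sqrt 2)⁻¹ : ℝ) : HQ) • !![1, 1; 1, -1] : Matrix (Fin 2) (Fin 2) HQ) ![1, qk] = fun m => (![1, -qk] : Fin 2 → HQ) m * (((((Real.sqrt 2)⁻¹ : ℝ)) : HQ) * (1 + qk)) := by
  generalize ((Real.sqrt 2)⁻¹ : ℝ) = r
  funext m; fin_cases m <;> ext <;>
    simp [Matrix.mulVec, dotProduct, Fin.sum_univ_two,
      Matrix.smul_apply, smul_eq_mul] <;> ring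
private lemma cH9 : Matrix.mulVec ((((Real.sqrt 2)⁻¹ : ℝ) : HQ) • !![1, 1; 1, -1] : Matrix (Fin 2) (Fin 2) HQ) ![1, -qk] = fun m => (![1, qk] : Fin 2 → HQ) m * (((((Real.sqrt 2)⁻¹ : ℝ)) : HQ) * (1 - qk)) := by
  generalize ((Real.sqrt 2)⁻¹ : ℝ) = r
  funext m; fin_cases m <;> ext <;>
    simp [Matrix.mulVec, dotProduct, Fin.sum_univ_two,
      Matrix.smul_apply, smul_eq_mul] <;> ring

/-- Every element of P₃ maps each of the ten MUB lines to a MUB line. -/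
theorem P3_symmetries_of_MUB_lines :
    ∀ g ∈ Submonoid.closure
      {(!![qi, 0; 0, 1] : Matrix (Fin 2) (Fin 2) HQ), !![qj, 0; 0, 1],
       (((Real.sqrt 2)⁻¹ : ℝ) : HQ) • !![1, 1; 1, -1]},
      ∀ a : Fin 10, ∃ b : Fin 10, ∃ lam : HQ, lam ≠ 0 ∧
        g.mulVec (mubVec a) = fun m => mubVec b m * lam := by
  intro g hg
  induction hg using Submonoid.closure_induction with
  | one =>
    intro a
    exact ⟨a, 1, one_ne_zero, by funext m; simp [Matrix.one_mulVec]⟩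
  | mul x y hx hy ihx ihy =>
    intro a
    obtain ⟨b, lam, hlam, hb⟩ := ihy a
    obtain ⟨d, mu, hmu, hd⟩ := ihx b
    refine ⟨d, mu * lam, mul_ne_zero hmu hlam, ?_⟩
    rw [← Matrix.mulVec_mulVec, hb, mulVec_scalar, hd]
    funext m
    simp [mul_assoc]
  | mem x hx =>
    simp only [Set.mem_insert_iff, Set.mem_singleton_iff] at hx
    rcases hx with h | h | h <;> subst h <;> intro a <;> fin_cases a
    · exact ⟨0, qi, hqi, cA0⟩
    · exact ⟨1, 1, one_ne_zero, cA1⟩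
    · exact ⟨5, qi, hqi, cA2⟩
    · exact ⟨4, qi, hqi, cA3⟩
    · exact ⟨2, qi, hqi, cA4⟩
    · exact ⟨3, qi, hqi, cA5⟩
    · exact ⟨8, qi, hqi, cA6⟩
    · exact ⟨9, qi, hqi, cA7⟩
    · exact ⟨7, qi, hqi, cA8⟩
    · exact ⟨6, qi, hqi, cA9⟩
    · exact ⟨0, qj, hqj, cB0⟩
    · exact ⟨1, 1, one_ne_zero, cB1⟩
    · exact ⟨7, qj, hqj, cB2⟩
    · exact ⟨6, qj, hqj, cB3⟩
    · exact ⟨9, qj, hqj, cB4⟩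
    · exact ⟨8, qj, hqj, cB5⟩
    · exact ⟨2, qj, hqj, cB6⟩
    · exact ⟨3, qj, hqj, cB7⟩
    · exact ⟨4, qj, hqj, cB8⟩
    · exact ⟨5, qj, hqj, cB9⟩
    · exact ⟨2, ((((Real.sqrt 2)⁻¹ : ℝ)) : HQ), hc, cH0⟩
    · exact ⟨3, ((((Real.sqrt 2)⁻¹ : ℝ)) : HQ), hc, cH1⟩
    · exact ⟨0, (((2:ℝ)) : HQ) * ((((Real.sqrt 2)⁻¹ : ℝ)) : HQ), mul_ne_zero (by simp [Quaternion.coe_injective.eq_iff' Quaternion.coe_zero]) hc, cH2⟩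
    · exact ⟨1, (((2:ℝ)) : HQ) * ((((Real.sqrt 2)⁻¹ : ℝ)) : HQ), mul_ne_zero (by simp [Quaternion.coe_injective.eq_iff' Quaternion.coe_zero]) hc, cH3⟩
    · exact ⟨5, ((((Real.sqrt 2)⁻¹ : ℝ)) : HQ) * (1 + qi), mul_ne_zero hc (re_ne_zero _ (by simp)), cH4⟩
    · exact ⟨4, ((((Real.sqrt 2)⁻¹ : ℝ)) : HQ) * (1 - qi), mul_ne_zero hc (re_ne_zero _ (by simp)), cH5⟩
    · exact ⟨7, ((((Real.sqrt 2)⁻¹ : ℝ)) : HQ) * (1 + qj), mul_ne_zero hc (re_ne_zero _ (by simp)), cH6⟩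
    · exact ⟨6, ((((Real.sqrt 2)⁻¹ : ℝ)) : HQ) * (1 - qj), mul_ne_zero hc (re_ne_zero _ (by simp)), cH7⟩
    · exact ⟨9, ((((Real.sqrt 2)⁻¹ : ℝ)) : HQ) * (1 + qk), mul_ne_zero hc (re_ne_zero _ (by simp)), cH8⟩
    · exact ⟨8, ((((Real.sqrt 2)⁻¹ : ℝ)) : HQ) * (1 - qk), mul_ne_zero hc (re_ne_zero _ (by simp)), cH9⟩
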